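/- Let m be a Borel measure on ℝ that is finite on compact sets, and let q be the associated function. Then for all real numbers α < y < β, one has ∫_{(α,β)} G_{α,β}(y,u) m(du) = ((β−y)/(β−α)) · q(y,α) + ((y−α)/(β−α)) · q(y,β), where G_{α,β}(u,v) = (β − max(u,v))·(min(u,v) − α)/(β − α) is the Green function of the interval (α,β). -/

import Mathlib

open MeasureTheory

/-- Signed measure of the open interval between `y` and `u`:
`m((y,u))` for `u ≥ y` and `-m((u,y))` for `u < y`. -/
noncomputable def signedIoo (m : Measure ℝ) (y u : ℝ) : ℝ :=
  if y ≤ u then (m (Set.Ioo y u)).toReal else -(m (Set.Ioo u y)).toReal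

/-- The function `q(y,x) = (1/2) m({y}) |x−y| + ∫_y^x m((y,u)) du`. -/
noncomputable def qFun (m : Measure ℝ) (y x : ℝ) : ℝ :=
  (1 / 2) * (m {y}).toReal * |x - y| + ∫ u in y..x, signedIoo m y u

lemma measure_Ioo_ne_top (m : Measure ℝ) [IsFiniteMeasureOnCompacts m] (a b : ℝ) :
    m (Set.Ioo a b) ≠ ⊤ :=
  ((measure_mono Set.Ioo_subset_Icc_self).trans_lt isCompact_Icc.measure_lt_top).ne

lemma lintA (m : Measure ℝ) [IsFiniteMeasureOnCompacts m] (a b : ℝ) :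
    ∫⁻ u in Set.Ioo a b, m (Set.Ioo a u) = ∫⁻ v in Set.Ioo a b, ENNReal.ofReal (b - v) ∂m := by
  have hS : MeasurableSet {p : ℝ × ℝ | a < p.2 ∧ p.2 < p.1} :=
    (measurableSet_lt measurable_const measurable_snd).inter
      (measurableSet_lt measurable_snd measurable_fst)
  have hF : Measurable fun p : ℝ × ℝ =>
      Set.indicator {p : ℝ × ℝ | a < p.2 ∧ p.2 < p.1} (fun _ => (1 : ENNReal)) p :=
    measurable_const.indicator hS
  have key := lintegral_lintegral_swap (μ := volume.restrict (Set.Ioo a b))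
    (ν := m.restrict (Set.Ioo a b))
    (f := fun u v => Set.indicator {p : ℝ × ℝ | a < p.2 ∧ p.2 < p.1} (fun _ => (1 : ENNReal)) (u, v))
    hF.aemeasurable
  have h1 : ∫⁻ u in Set.Ioo a b, m (Set.Ioo a u)
      = ∫⁻ u in Set.Ioo a b, ∫⁻ v in Set.Ioo a b,
          Set.indicator {p : ℝ × ℝ | a < p.2 ∧ p.2 < p.1} (fun _ => (1 : ENNReal)) (u, v) ∂m := by
    refine setLIntegral_congr_fun measurableSet_Ioo (fun u hu => ?_)
    have : (fun v => Set.indicator {p : ℝ × ℝ | a < p.2 ∧ p.2 < p.1}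
        (fun _ => (1 : ENNReal)) (u, v)) = (Set.Ioo a u).indicator (fun _ => (1 : ENNReal)) := by
      ext v
      by_cases h : a < v ∧ v < u <;>
        simp [Set.indicator_apply, Set.mem_Ioo, h, Set.mem_setOf_eq]
    rw [this, lintegral_indicator measurableSet_Ioo, Measure.restrict_restrict measurableSet_Ioo]
    rw [Set.inter_eq_left.mpr (Set.Ioo_subset_Ioo le_rfl hu.2.le)]
    simp
  have h2 : ∫⁻ v in Set.Ioo a b, (∫⁻ u in Set.Ioo a b,
        Set.indicator {p : ℝ × ℝ | a < p.2 ∧ p.2 < p.1} (fun _ => (1 : ENNReal)) (u, v)) ∂m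
      = ∫⁻ v in Set.Ioo a b, ENNReal.ofReal (b - v) ∂m := by
    refine setLIntegral_congr_fun measurableSet_Ioo (fun v hv => ?_)
    have : (fun u => Set.indicator {p : ℝ × ℝ | a < p.2 ∧ p.2 < p.1}
        (fun _ => (1 : ENNReal)) (u, v)) = (Set.Ioi v).indicator (fun _ => (1 : ENNReal)) := by
      ext u
      by_cases h : v < u <;>
        simp [Set.indicator_apply, Set.mem_Ioi, h, Set.mem_setOf_eq, hv.1]
    rw [this, lintegral_indicator measurableSet_Ioi,
      Measure.restrict_restrict measurableSet_Ioi]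
    have : Set.Ioi v ∩ Set.Ioo a b = Set.Ioo v b := by
      ext u; simp only [Set.mem_inter_iff, Set.mem_Ioi, Set.mem_Ioo]
      constructor
      · rintro ⟨h1, _, h3⟩; exact ⟨h1, h3⟩
      · rintro ⟨h1, h3⟩; exact ⟨h1, hv.1.trans h1, h3⟩
    rw [this]
    simp [Real.volume_Ioo]
  exact h1.trans (key.trans h2)

lemma lintB (m : Measure ℝ) [IsFiniteMeasureOnCompacts m] (a b : ℝ) :
    ∫⁻ u in Set.Ioo a b, m (Set.Ioo u b) = ∫⁻ v in Set.Ioo a b, ENNReal.ofReal (v - a) ∂m := by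
  have hS : MeasurableSet {p : ℝ × ℝ | p.1 < p.2 ∧ p.2 < b} :=
    (measurableSet_lt measurable_fst measurable_snd).inter
      (measurableSet_lt measurable_snd measurable_const)
  have hF : Measurable fun p : ℝ × ℝ =>
      Set.indicator {p : ℝ × ℝ | p.1 < p.2 ∧ p.2 < b} (fun _ => (1 : ENNReal)) p :=
    measurable_const.indicator hS
  have key := lintegral_lintegral_swap (μ := volume.restrict (Set.Ioo a b))
    (ν := m.restrict (Set.Ioo a b))
    (f := fun u v => Set.indicator {p : ℝ × ℝ | p.1 < p.2 ∧ p.2 < b} (fun _ => (1 : ENNReal)) (u, v))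
    hF.aemeasurable
  have h1 : ∫⁻ u in Set.Ioo a b, m (Set.Ioo u b)
      = ∫⁻ u in Set.Ioo a b, ∫⁻ v in Set.Ioo a b,
          Set.indicator {p : ℝ × ℝ | p.1 < p.2 ∧ p.2 < b} (fun _ => (1 : ENNReal)) (u, v) ∂m := by
    refine setLIntegral_congr_fun measurableSet_Ioo (fun u hu => ?_)
    have : (fun v => Set.indicator {p : ℝ × ℝ | p.1 < p.2 ∧ p.2 < b}
        (fun _ => (1 : ENNReal)) (u, v)) = (Set.Ioo u b).indicator (fun _ => (1 : ENNReal)) := by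
      ext v
      by_cases h : u < v ∧ v < b <;>
        simp [Set.indicator_apply, Set.mem_Ioo, h, Set.mem_setOf_eq]
    rw [this, lintegral_indicator measurableSet_Ioo, Measure.restrict_restrict measurableSet_Ioo]
    rw [Set.inter_eq_left.mpr (Set.Ioo_subset_Ioo hu.1.le le_rfl)]
    simp
  have h2 : ∫⁻ v in Set.Ioo a b, (∫⁻ u in Set.Ioo a b,
        Set.indicator {p : ℝ × ℝ | p.1 < p.2 ∧ p.2 < b} (fun _ => (1 : ENNReal)) (u, v)) ∂m
      = ∫⁻ v in Set.Ioo a b, ENNReal.ofReal (v - a) ∂m := by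
    refine setLIntegral_congr_fun measurableSet_Ioo (fun v hv => ?_)
    have : (fun u => Set.indicator {p : ℝ × ℝ | p.1 < p.2 ∧ p.2 < b}
        (fun _ => (1 : ENNReal)) (u, v)) = (Set.Iio v).indicator (fun _ => (1 : ENNReal)) := by
      ext u
      by_cases h : u < v <;>
        simp [Set.indicator_apply, Set.mem_Iio, h, Set.mem_setOf_eq, hv.2]
    rw [this, lintegral_indicator measurableSet_Iio,
      Measure.restrict_restrict measurableSet_Iio]
    have : Set.Iio v ∩ Set.Ioo a b = Set.Ioo a v := by
      ext u; simp only [Set.mem_inter_iff, Set.mem_Iio, Set.mem_Ioo]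
      constructor
      · rintro ⟨h1, h2, _⟩; exact ⟨h2, h1⟩
      · rintro ⟨h1', h3⟩; exact ⟨h3, h1', h3.trans hv.2⟩
    rw [this]
    simp [Real.volume_Ioo]
  exact h1.trans (key.trans h2)

lemma realA (m : Measure ℝ) [IsFiniteMeasureOnCompacts m] (a b : ℝ) (hab : a ≤ b) :
    ∫ u in a..b, (m (Set.Ioo a u)).toReal = ∫ v in Set.Ioo a b, (b - v) ∂m := by
  have hmono : Monotone (fun u => m (Set.Ioo a u)) :=
    fun u u' h => measure_mono (Set.Ioo_subset_Ioo le_rfl h)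
  have hmeas : AEMeasurable (fun u => m (Set.Ioo a u)) (volume.restrict (Set.Ioo a b)) :=
    hmono.measurable.aemeasurable
  have hfin : ∀ᵐ u ∂(volume.restrict (Set.Ioo a b)), m (Set.Ioo a u) < ⊤ :=
    ae_of_all _ fun u => (measure_mono (Set.Ioo_subset_Icc_self)).trans_lt
      isCompact_Icc.measure_lt_top
  rw [intervalIntegral.integral_of_le hab, integral_Ioc_eq_integral_Ioo,
    integral_toReal hmeas hfin, lintA m a b]
  rw [integral_eq_lintegral_of_nonneg_ae]
  · exact ((ae_restrict_iff' measurableSet_Ioo).2 (ae_of_all _ fun v hv => by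
      simp only [Set.mem_Ioo] at hv; simp only [Pi.zero_apply]; linarith [hv.2]))
  · exact (continuous_const.sub continuous_id).aestronglyMeasurable

lemma realB (m : Measure ℝ) [IsFiniteMeasureOnCompacts m] (a b : ℝ) (hab : a ≤ b) :
    ∫ u in a..b, (m (Set.Ioo u b)).toReal = ∫ v in Set.Ioo a b, (v - a) ∂m := by
  have hmono : Antitone (fun u => m (Set.Ioo u b)) :=
    fun u u' h => measure_mono (Set.Ioo_subset_Ioo h le_rfl)
  have hmeas : AEMeasurable (fun u => m (Set.Ioo u b)) (volume.restrict (Set.Ioo a b)) :=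
    hmono.measurable.aemeasurable
  have hfin : ∀ᵐ u ∂(volume.restrict (Set.Ioo a b)), m (Set.Ioo u b) < ⊤ :=
    ae_of_all _ fun u => (measure_mono (Set.Ioo_subset_Icc_self)).trans_lt
      isCompact_Icc.measure_lt_top
  rw [intervalIntegral.integral_of_le hab, integral_Ioc_eq_integral_Ioo,
    integral_toReal hmeas hfin, lintB m a b]
  rw [integral_eq_lintegral_of_nonneg_ae]
  · exact ((ae_restrict_iff' measurableSet_Ioo).2 (ae_of_all _ fun v hv => by
      simp only [Set.mem_Ioo] at hv; simp only [Pi.zero_apply]; linarith [hv.1]))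
  · exact (continuous_id.sub continuous_const).aestronglyMeasurable

theorem integral_green_eq (m : Measure ℝ) [IsFiniteMeasureOnCompacts m]
    (α β y : ℝ) (h1 : α < y) (h2 : y < β) :
    ∫ u in Set.Ioo α β, (β - max y u) * (min y u - α) / (β - α) ∂m
      = ((β - y) / (β - α)) * qFun m y α + ((y - α) / (β - α)) * qFun m y β := by
  have hβα : (0:ℝ) < β - α := by linarith
  set f : ℝ → ℝ := fun u => (β - max y u) * (min y u - α) / (β - α) with hf
  have hfc : Continuous f := by
    apply Continuous.div_const
    exact ((continuous_const.sub (continuous_const.max continuous_id)).mul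
      ((continuous_const.min continuous_id).sub continuous_const))
  have hint : IntegrableOn f (Set.Ioo α β) m := by
    apply Measure.integrableOn_of_bounded (M := β - α) (measure_Ioo_ne_top m α β)
      hfc.aestronglyMeasurable
    refine (ae_restrict_iff' measurableSet_Ioo).2 (ae_of_all _ fun u hu => ?_)
    simp only [Set.mem_Ioo] at hu
    have hmax1 : max y u ≤ β := max_le h2.le hu.2.le
    have hmax2 : α ≤ max y u := le_trans h1.le (le_max_left _ _)
    have hmin1 : α ≤ min y u := le_min h1.le hu.1.le
    have hmin2 : min y u ≤ β := le_trans (min_le_left _ _) h2.le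
    simp only [hf, Real.norm_eq_abs]
    rw [abs_div, abs_of_pos hβα, abs_mul, abs_of_nonneg (by linarith),
      abs_of_nonneg (by linarith), div_le_iff₀ hβα]
    nlinarith
  -- split the domain
  have hd1 : Disjoint (Set.Ioo α y) (Set.Ico y β) :=
    Set.disjoint_left.2 fun u hu hu' => absurd hu'.1 (not_le.2 hu.2)
  have hd2 : Disjoint ({y} : Set ℝ) (Set.Ioo y β) :=
    Set.disjoint_left.2 fun u hu hu' => by
      rw [Set.mem_singleton_iff] at hu; exact absurd hu'.1 (by simp [hu])
  have hsub1 : Set.Ioo α y ⊆ Set.Ioo α β := Set.Ioo_subset_Ioo le_rfl h2.le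
  have hsub2 : Set.Ico y β ⊆ Set.Ioo α β := Set.Ico_subset_Ioo_left h1
  have hsplit : ∫ u in Set.Ioo α β, f u ∂m
      = ∫ u in Set.Ioo α y, f u ∂m + ((m {y}).toReal * f y + ∫ u in Set.Ioo y β, f u ∂m) := by
    rw [← Set.Ioo_union_Ico_eq_Ioo h1 h2.le,
      setIntegral_union hd1 measurableSet_Ico (hint.mono_set hsub1) (hint.mono_set hsub2),
      ← Set.Ioo_insert_left h2, Set.insert_eq,
      setIntegral_union hd2 measurableSet_Ioo
        ((hint.mono_set hsub2).mono_set (by rw [← Set.Ioo_insert_left h2]; exact fun u hu => Set.mem_insert_iff.2 (Or.inl hu) ))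
        ((hint.mono_set hsub2).mono_set (by rw [← Set.Ioo_insert_left h2]; exact fun u hu => Set.mem_insert_iff.2 (Or.inr hu))),
      integral_singleton]
    simp
    exact Or.inl rfl
  have hL : ∫ u in Set.Ioo α y, f u ∂m
      = ((β - y) / (β - α)) * ∫ u in Set.Ioo α y, (u - α) ∂m := by
    rw [← integral_const_mul]
    refine setIntegral_congr_fun measurableSet_Ioo fun u hu => ?_
    simp only [hf]
    rw [max_eq_left hu.2.le, min_eq_right hu.2.le]
    ring
  have hR : ∫ u in Set.Ioo y β, f u ∂m
      = ((y - α) / (β - α)) * ∫ u in Set.Ioo y β, (β - u) ∂m := by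
    rw [← integral_const_mul]
    refine setIntegral_congr_fun measurableSet_Ioo fun u hu => ?_
    simp only [hf]
    rw [max_eq_right hu.1.le, min_eq_left hu.1.le]
    ring
  have hfy : f y = (β - y) * (y - α) / (β - α) := by simp [hf]
  have hsign1 : Set.EqOn (signedIoo m y) (fun u => -(m (Set.Ioo u y)).toReal)
      (Set.uIcc α y) := by
    intro u hu
    rw [Set.uIcc_of_le h1.le] at hu
    unfold signedIoo
    split_ifs with h
    · have : u = y := le_antisymm hu.2 h
      subst this; simp
    · rfl
  have hsign2 : Set.EqOn (signedIoo m y) (fun u => (m (Set.Ioo y u)).toReal)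
      (Set.uIcc y β) := by
    intro u hu
    rw [Set.uIcc_of_le h2.le] at hu
    unfold signedIoo
    split_ifs with h
    · rfl
    · exact absurd hu.1 h
  have hqα : qFun m y α
      = 1 / 2 * (m {y}).toReal * (y - α) + ∫ v in Set.Ioo α y, (v - α) ∂m := by
    unfold qFun
    rw [show |α - y| = y - α from by rw [abs_of_neg (by linarith)]; ring_nf]
    congr 1
    rw [intervalIntegral.integral_symm, intervalIntegral.integral_congr hsign1,
      intervalIntegral.integral_neg, neg_neg, realB m α y h1.le]
  have hqβ : qFun m y β
      = 1 / 2 * (m {y}).toReal * (β - y) + ∫ v in Set.Ioo y β, (β - v) ∂m := by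
    unfold qFun
    rw [show |β - y| = β - y from abs_of_pos (by linarith)]
    congr 1
    rw [intervalIntegral.integral_congr hsign2, realA m y β h2.le]
  rw [show ∫ u in Set.Ioo α β, (β - max y u) * (min y u - α) / (β - α) ∂m
      = ∫ u in Set.Ioo α β, f u ∂m from rfl,
    hsplit, hL, hR, hfy, hqα, hqβ]
  field_simp
  ring
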